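/- arXiv:2605.04893 — 2 statements merged into one kernel-verified Lean document; each statement's English description precedes it below -/
import Mathlib

section
/- Let A ∈ ℝ^{n_q×n_k} be row-stochastic with positive column degrees d_j, and let Δ be the diagonal matrix with entries δ_j = d_j^{-1/2} − d̄^{-1/2}, where d̄ = (Σ_j d_j)/n_k. Then the operator norm of AΔ satisfies σ₁(AΔ) ≤ max_j |1 − √(d_j/d̄)|. -/
open Matrix BigOperators

/-- Operator-norm bound `σ₁(AΔ) ≤ max_j |1 − √(d_j/d̄)|` for row-stochastic `A`
with positive column degrees `d_j`, mean degree `d̄`, and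
`Δ = diag(d_j^{-1/2} − d̄^{-1/2})`: for every vector `x`,
`‖(AΔ) x‖² ≤ (max_j |1 − √(d_j/d̄)|)² ‖x‖²`. -/
theorem opNorm_A_Delta_le {nq nk : ℕ} (hnk : 0 < nk)
    (A : Matrix (Fin nq) (Fin nk) ℝ)
    (hnonneg : ∀ i j, 0 ≤ A i j)
    (hrow : ∀ i, ∑ j, A i j = 1)
    (d : Fin nk → ℝ) (hd : ∀ j, d j = ∑ i, A i j) (hdpos : ∀ j, 0 < d j)
    (dbar : ℝ) (hdbar : dbar = (∑ j, d j) / nk) :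
    ∀ x : Fin nk → ℝ,
      ∑ i, ((A * Matrix.diagonal
              (fun j => (Real.sqrt (d j))⁻¹ - (Real.sqrt dbar)⁻¹)).mulVec x i)^2
        ≤ (Finset.univ.sup' (Finset.univ_nonempty_iff.mpr ⟨⟨0, hnk⟩⟩)
            (fun j => |1 - Real.sqrt (d j / dbar)|))^2 * ∑ j, (x j)^2 := by
  intro x
  set δ : Fin nk → ℝ := fun j => (Real.sqrt (d j))⁻¹ - (Real.sqrt dbar)⁻¹ with hδ
  set M : ℝ := Finset.univ.sup' (Finset.univ_nonempty_iff.mpr ⟨⟨0, hnk⟩⟩)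
      (fun j => |1 - Real.sqrt (d j / dbar)|) with hM
  have hdbarpos : 0 < dbar := by
    rw [hdbar]
    apply div_pos
    · exact Finset.sum_pos (fun j _ => hdpos j) (Finset.univ_nonempty_iff.mpr ⟨⟨0, hnk⟩⟩)
    · exact_mod_cast hnk
  -- key: d j * (δ j)^2 ≤ M^2
  have hkey : ∀ j, d j * (δ j)^2 ≤ M^2 := by
    intro j
    have hsd : (0:ℝ) < Real.sqrt (d j) := Real.sqrt_pos.mpr (hdpos j)
    have hsb : (0:ℝ) < Real.sqrt dbar := Real.sqrt_pos.mpr hdbarpos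
    have h1 : Real.sqrt (d j) * δ j = 1 - Real.sqrt (d j / dbar) := by
      rw [hδ, Real.sqrt_div (le_of_lt (hdpos j))]
      field_simp
    have h2 : d j * (δ j)^2 = (Real.sqrt (d j) * δ j)^2 := by
      rw [mul_pow, Real.sq_sqrt (le_of_lt (hdpos j))]
    rw [h2, h1]
    have hle : |1 - Real.sqrt (d j / dbar)| ≤ M :=
      Finset.le_sup' (fun j => |1 - Real.sqrt (d j / dbar)|) (Finset.mem_univ j)
    calc (1 - Real.sqrt (d j / dbar))^2 = |1 - Real.sqrt (d j / dbar)|^2 := (sq_abs _).symm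
      _ ≤ M^2 := by
          apply pow_le_pow_left₀ (abs_nonneg _) hle
  -- per-row Cauchy–Schwarz
  have hrowbound : ∀ i, ((A * Matrix.diagonal δ).mulVec x i)^2
      ≤ ∑ j, A i j * (δ j * x j)^2 := by
    intro i
    have hmv : (A * Matrix.diagonal δ).mulVec x i = ∑ j, A i j * (δ j * x j) := by
      simp [Matrix.mulVec, dotProduct, Matrix.mul_diagonal, mul_assoc]
    rw [hmv]
    have hcs2 := Finset.sum_mul_sq_le_sq_mul_sq (Finset.univ : Finset (Fin nk))
      (fun j => Real.sqrt (A i j)) (fun j => Real.sqrt (A i j) * (δ j * x j))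
    have heq : ∀ j, Real.sqrt (A i j) * (Real.sqrt (A i j) * (δ j * x j))
        = A i j * (δ j * x j) := by
      intro j
      rw [← mul_assoc, Real.mul_self_sqrt (hnonneg i j)]
    calc (∑ j, A i j * (δ j * x j))^2
        = (∑ j, Real.sqrt (A i j) * (Real.sqrt (A i j) * (δ j * x j)))^2 := by
          simp_rw [heq]
      _ ≤ (∑ j, Real.sqrt (A i j)^2) * ∑ j, (Real.sqrt (A i j) * (δ j * x j))^2 := hcs2
      _ = ∑ j, A i j * (δ j * x j)^2 := by
          have h1 : ∑ j, Real.sqrt (A i j)^2 = 1 := by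
            simp_rw [Real.sq_sqrt (hnonneg i _)]; exact hrow i
          rw [h1, one_mul]
          congr 1
          ext j
          rw [mul_pow, Real.sq_sqrt (hnonneg i j)]
  calc ∑ i, ((A * Matrix.diagonal δ).mulVec x i)^2
      ≤ ∑ i, ∑ j, A i j * (δ j * x j)^2 :=
        Finset.sum_le_sum (fun i _ => hrowbound i)
    _ = ∑ j, d j * (δ j * x j)^2 := by
        rw [Finset.sum_comm]
        exact Finset.sum_congr rfl (fun j _ => by rw [← Finset.sum_mul, ← hd j])
    _ ≤ ∑ j, M^2 * (x j)^2 := by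
        apply Finset.sum_le_sum
        intro j _
        have : d j * (δ j * x j)^2 = (d j * (δ j)^2) * (x j)^2 := by ring
        rw [this]
        exact mul_le_mul_of_nonneg_right (hkey j) (sq_nonneg _)
    _ = M^2 * ∑ j, (x j)^2 := by rw [Finset.mul_sum]
end

section
/- For uniform causal attention B ∈ ℝ^{n×n} with B_{ij} = 1/(i+1) for j ≤ i (0-indexed) and 0 otherwise, and the temporal cut S_t consisting of queries Q_0,…,Q_{t−1} and keys K_0,…,K_{t−1} in the bipartite dilation graph, the cut weight equals cut(S_t) = t·(H_n − H_t) and the volume equals vol(S_t) = t·(2 + H_n − H_t), where H_m = Σ_{k=1}^m 1/k. -/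
open Matrix BigOperators

/-- Harmonic number `H_m = ∑_{k=1}^m 1/k`. -/
noncomputable def harmSum (m : ℕ) : ℝ := ∑ k ∈ Finset.range m, (1 : ℝ) / (k + 1)

/-- Uniform causal attention `B_{ij} = 1/(i+1)` for `j ≤ i` (0-indexed). -/
noncomputable def uniformCausal (n : ℕ) : Matrix (Fin n) (Fin n) ℝ :=
  fun i j => if (j : ℕ) ≤ (i : ℕ) then 1 / ((i : ℕ) + 1) else 0

/-- Cut weight of the temporal cut `S_t` on the bipartite dilation graph:
the total weight of edges `Q_i — K_j` with exactly one endpoint in `S_t`. -/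
noncomputable def cutWeight (n t : ℕ) : ℝ :=
  ∑ i : Fin n, ∑ j : Fin n,
    if ((i : ℕ) < t ∧ ¬ (j : ℕ) < t) ∨ ((j : ℕ) < t ∧ ¬ (i : ℕ) < t) then
      uniformCausal n i j else 0

/-- Volume of `S_t`: query vertices weighted by row sums, key vertices by
column sums. -/
noncomputable def volWeight (n t : ℕ) : ℝ :=
  (∑ i : Fin n, if (i : ℕ) < t then ∑ j : Fin n, uniformCausal n i j else 0) +
  (∑ j : Fin n, if (j : ℕ) < t then ∑ i : Fin n, uniformCausal n i j else 0)

lemma sum_ite_lt' (n t : ℕ) (ht : t ≤ n) (f : ℕ → ℝ) :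
    ∑ k ∈ Finset.range n, (if k < t then f k else 0) = ∑ k ∈ Finset.range t, f k := by
  rw [← Finset.sum_filter]; congr 1; ext k; simp; omega

lemma sum_ite_ge' (n t : ℕ) (f : ℕ → ℝ) :
    ∑ k ∈ Finset.range n, (if t ≤ k then f k else 0) = ∑ k ∈ Finset.Ico t n, f k := by
  rw [← Finset.sum_filter]; congr 1; ext k; simp [Finset.mem_Ico]; omega

lemma harm_sub' (t n : ℕ) (ht : t ≤ n) :
    harmSum n - harmSum t = ∑ k ∈ Finset.Ico t n, (1:ℝ)/(k+1) := by
  rw [eq_comm, Finset.sum_Ico_eq_sub _ ht]; rfl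

lemma cut_core (n t : ℕ) (ht : t ≤ n) :
    ∑ i ∈ Finset.range n, ∑ j ∈ Finset.range n,
      (if j < t ∧ t ≤ i then (1:ℝ)/(i+1) else 0) = t * (harmSum n - harmSum t) := by
  have h1 : ∀ i ∈ Finset.range n, ∑ j ∈ Finset.range n,
      (if j < t ∧ t ≤ i then (1:ℝ)/(i+1) else 0)
      = if t ≤ i then (t:ℝ) * ((1:ℝ)/(i+1)) else 0 := by
    intro i _
    by_cases h : t ≤ i
    · simp only [h, and_true, if_true]
      rw [sum_ite_lt' n t ht, Finset.sum_const, Finset.card_range, nsmul_eq_mul]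
    · simp [h]
  rw [Finset.sum_congr rfl h1,
    sum_ite_ge' n t (fun i => (t:ℝ) * ((1:ℝ)/(i+1))), ← Finset.mul_sum,
    harm_sub' t n ht]

/-- Cut and volume identities for uniform causal attention:
`cut(S_t) = t (H_n − H_t)` and `vol(S_t) = t (2 + H_n − H_t)`. -/
theorem uniformCausal_cut_vol (n t : ℕ) (ht : t ≤ n) :
    cutWeight n t = t * (harmSum n - harmSum t) ∧
    volWeight n t = t * (2 + harmSum n - harmSum t) := by
  -- row sums are 1
  have rowsum : ∀ i : Fin n, ∑ j : Fin n, uniformCausal n i j = 1 := by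
    intro i
    have hne : ((i : ℕ) : ℝ) + 1 ≠ 0 := by positivity
    unfold uniformCausal
    rw [Fin.sum_univ_eq_sum_range (fun j => if j ≤ (i:ℕ) then (1:ℝ)/((i:ℕ)+1) else 0) n]
    have hcong : ∀ j ∈ Finset.range n, (if j ≤ (i:ℕ) then (1:ℝ)/((i:ℕ)+1) else 0)
        = if j < (i:ℕ)+1 then (1:ℝ)/((i:ℕ)+1) else 0 := by
      intro j _; congr 1; simp [Nat.lt_succ_iff]
    rw [Finset.sum_congr rfl hcong, sum_ite_lt' n ((i:ℕ)+1) i.isLt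
      (fun _ => (1:ℝ)/((i:ℕ)+1)), Finset.sum_const, Finset.card_range, nsmul_eq_mul]
    push_cast
    field_simp
  constructor
  · -- cut
    have step1 : cutWeight n t = ∑ i : Fin n, ∑ j : Fin n,
        (if (j:ℕ) < t ∧ t ≤ (i:ℕ) then (1:ℝ)/((i:ℕ)+1) else 0) := by
      unfold cutWeight uniformCausal
      refine Finset.sum_congr rfl fun i _ => Finset.sum_congr rfl fun j _ => ?_
      split_ifs <;> first | rfl | (exfalso; omega)
    have step2 : ∀ i : Fin n, ∑ j : Fin n,
        (if (j:ℕ) < t ∧ t ≤ (i:ℕ) then (1:ℝ)/((i:ℕ)+1) else 0)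
        = ∑ j ∈ Finset.range n, (if j < t ∧ t ≤ (i:ℕ) then (1:ℝ)/((i:ℕ)+1) else 0) :=
      fun i => Fin.sum_univ_eq_sum_range
        (fun j => if j < t ∧ t ≤ (i:ℕ) then (1:ℝ)/((i:ℕ)+1) else 0) n
    rw [step1]
    simp only [step2]
    rw [Fin.sum_univ_eq_sum_range
      (fun i => ∑ j ∈ Finset.range n, (if j < t ∧ t ≤ i then (1:ℝ)/(i+1) else 0)) n]
    exact cut_core n t ht
  · -- vol
    have V1 : (∑ i : Fin n, if (i : ℕ) < t then ∑ j : Fin n, uniformCausal n i j else 0)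
        = (t : ℝ) := by
      have : ∀ i : Fin n, (if (i : ℕ) < t then ∑ j : Fin n, uniformCausal n i j else 0)
          = if (i:ℕ) < t then (1:ℝ) else 0 := by
        intro i; by_cases h : (i:ℕ) < t <;> simp [h, rowsum i]
      simp only [this]
      rw [Fin.sum_univ_eq_sum_range (fun i => if i < t then (1:ℝ) else 0) n,
        sum_ite_lt' n t ht (fun _ => (1:ℝ)), Finset.sum_const, Finset.card_range,
        nsmul_eq_mul, mul_one]
    have V2 : (∑ j : Fin n, if (j : ℕ) < t then ∑ i : Fin n, uniformCausal n i j else 0)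
        = (t : ℝ) + t * (harmSum n - harmSum t) := by
      have swap1 : (∑ j : Fin n, if (j : ℕ) < t then ∑ i : Fin n, uniformCausal n i j else 0)
          = ∑ i : Fin n, ∑ j : Fin n,
              (if (j:ℕ) < t ∧ (j:ℕ) ≤ (i:ℕ) then (1:ℝ)/((i:ℕ)+1) else 0) := by
        rw [show (∑ j : Fin n, if (j : ℕ) < t then ∑ i : Fin n, uniformCausal n i j else 0)
            = ∑ j : Fin n, ∑ i : Fin n,
              (if (j:ℕ) < t ∧ (j:ℕ) ≤ (i:ℕ) then (1:ℝ)/((i:ℕ)+1) else 0) from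
          Finset.sum_congr rfl fun j _ => by
            by_cases h : (j:ℕ) < t
            · simp only [h, if_true, true_and]
              exact Finset.sum_congr rfl fun i _ => rfl
            · simp [h]]
        exact Finset.sum_comm
      rw [swap1]
      have step2 : ∀ i : Fin n, ∑ j : Fin n,
          (if (j:ℕ) < t ∧ (j:ℕ) ≤ (i:ℕ) then (1:ℝ)/((i:ℕ)+1) else 0)
          = ∑ j ∈ Finset.range n, (if j < t ∧ j ≤ (i:ℕ) then (1:ℝ)/((i:ℕ)+1) else 0) :=
        fun i => Fin.sum_univ_eq_sum_range
          (fun j => if j < t ∧ j ≤ (i:ℕ) then (1:ℝ)/((i:ℕ)+1) else 0) n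
      simp only [step2]
      rw [Fin.sum_univ_eq_sum_range
        (fun i => ∑ j ∈ Finset.range n, (if j < t ∧ j ≤ i then (1:ℝ)/(i+1) else 0)) n]
      have inner : ∀ i ∈ Finset.range n,
          (∑ j ∈ Finset.range n, (if j < t ∧ j ≤ i then (1:ℝ)/(i+1) else 0))
          = (if i < t then (1:ℝ) else 0) + (if t ≤ i then (t:ℝ)*((1:ℝ)/(i+1)) else 0) := by
        intro i hi
        have hin : i < n := Finset.mem_range.mp hi
        have hne : ((i : ℕ) : ℝ) + 1 ≠ 0 := by positivity
        have hcong : ∀ j ∈ Finset.range n, (if j < t ∧ j ≤ i then (1:ℝ)/(i+1) else 0)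
            = if j < min t (i+1) then (1:ℝ)/(i+1) else 0 := by
          intro j _; congr 1; rw [eq_iff_iff, lt_min_iff, Nat.lt_succ_iff]
        rw [Finset.sum_congr rfl hcong, sum_ite_lt' n (min t (i+1)) (by omega)
          (fun _ => (1:ℝ)/(i+1)), Finset.sum_const, Finset.card_range, nsmul_eq_mul]
        by_cases h : i < t
        · have : min t (i+1) = i+1 := by omega
          rw [this]
          simp only [h, if_true, if_neg (by omega : ¬ t ≤ i), add_zero]
          push_cast
          field_simp
        · have : min t (i+1) = t := by omega
          rw [this]
          simp [h, not_lt.mp h]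
      rw [Finset.sum_congr rfl inner, Finset.sum_add_distrib,
        sum_ite_lt' n t ht (fun _ => (1:ℝ)),
        sum_ite_ge' n t (fun i => (t:ℝ)*((1:ℝ)/(i+1))), ← Finset.mul_sum,
        harm_sub' t n ht, Finset.sum_const, Finset.card_range, nsmul_eq_mul, mul_one]
    unfold volWeight
    rw [V1, V2]
    ring
end
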